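/- Fix A ∈ ℂ^{n×n} and an integer k with 1 ≤ k ≤ (n+1)/2. Let z_k ∈ ℂ be a minimizer of z ↦ σ_k(zI − A) over ℂ (such a minimizer exists), and set s_k = σ_k(z_k I − A). Then for every z ∈ ℂ, σ_k(zI − A) ≥ max( s_k, |z − z_k|/2 ). -/

import Mathlib

open MeasureTheory Matrix Filter
open scoped Pointwise

noncomputable section

/-- The `k`-th largest singular value (1-indexed) of a square complex matrix: the
square root of the `k`-th largest eigenvalue of `Mᴴ * M`; junk value `0` out of range. -/
def sval {m : ℕ} (M : Matrix (Fin m) (Fin m) ℂ) (k : ℕ) : ℝ :=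
  if h : 1 ≤ k ∧ k ≤ m then
    Real.sqrt
      (((Matrix.isHermitian_conjTranspose_mul_self M).eigenvalues ∘
          Tuple.sort (Matrix.isHermitian_conjTranspose_mul_self M).eigenvalues)
        ⟨m - k, by omega⟩)
  else 0

end

noncomputable section Aux15

variable {n : ℕ}

local notation "E" => EuclideanSpace ℂ (Fin n)

def toE (x : Fin n → ℂ) : E := WithLp.toLp 2 x

namespace Aux15

variable (M : Matrix (Fin n) (Fin n) ℂ)

def hH : (Mᴴ * M).IsHermitian := isHermitian_conjTranspose_mul_self M

def mu : Fin n → ℝ := (hH M).eigenvalues ∘ Tuple.sort (hH M).eigenvalues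

def bas : OrthonormalBasis (Fin n) ℂ E :=
  (hH M).eigenvectorBasis.reindex (Tuple.sort (hH M).eigenvalues).symm

lemma mu_monotone : Monotone (mu M) := Tuple.monotone_sort _

lemma mu_nonneg (i : Fin n) : 0 ≤ mu M i :=
  Matrix.eigenvalues_conjTranspose_mul_self_nonneg M _

lemma mulVec_bas (j : Fin n) :
    (Mᴴ * M) *ᵥ (bas M j : Fin n → ℂ) = mu M j • (bas M j : Fin n → ℂ) := by
  simpa [bas, OrthonormalBasis.reindex_apply, mu] using
    (hH M).mulVec_eigenvectorBasis (Tuple.sort (hH M).eigenvalues j)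

end Aux15
end Aux15

noncomputable section Aux15b
open Aux15
variable {n : ℕ} (M : Matrix (Fin n) (Fin n) ℂ)

local notation "E" => EuclideanSpace ℂ (Fin n)

lemma inner_toE (x y : Fin n → ℂ) : (inner ℂ (toE x) (toE y) : ℂ) = star x ⬝ᵥ y := by
  rw [PiLp.inner_apply]; simp only [RCLike.inner_apply', dotProduct, Pi.star_apply, toE]; rfl

lemma repr_mulVecH (x : E) (j : Fin n) :
    (bas M).repr (toE ((Mᴴ * M) *ᵥ (x : Fin n → ℂ))) j = (mu M j : ℂ) * (bas M).repr x j := by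
  rw [OrthonormalBasis.repr_apply_apply, OrthonormalBasis.repr_apply_apply]
  have h1 : (inner ℂ (bas M j) (toE ((Mᴴ * M) *ᵥ (x : Fin n → ℂ))) : ℂ)
      = star ((Mᴴ * M) *ᵥ (bas M j : Fin n → ℂ)) ⬝ᵥ (x : Fin n → ℂ) := by
    have h0 : (inner ℂ (bas M j) (toE ((Mᴴ * M) *ᵥ (x : Fin n → ℂ))) : ℂ)
        = star (bas M j : Fin n → ℂ) ⬝ᵥ ((Mᴴ * M) *ᵥ (x : Fin n → ℂ)) := by
      show inner ℂ (toE (bas M j : Fin n → ℂ)) _ = _; exact inner_toE _ _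
    rw [h0, star_mulVec, dotProduct_mulVec, (hH M).eq]
  rw [h1, mulVec_bas, star_smul, smul_dotProduct]
  simp only [Complex.star_def, Complex.conj_ofReal, smul_eq_mul]
  rw [PiLp.inner_apply, star_trivial, Complex.real_smul]; simp only [RCLike.inner_apply', dotProduct, Pi.star_apply]; rfl

lemma quad (x : E) :
    ‖toE (M *ᵥ (x : Fin n → ℂ))‖^2 = ∑ j, mu M j * ‖(bas M).repr x j‖^2 := by
  have key : (inner ℂ (toE (M *ᵥ (x : Fin n → ℂ))) (toE (M *ᵥ (x : Fin n → ℂ))) : ℂ)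
      = ((∑ j, mu M j * ‖(bas M).repr x j‖^2 : ℝ) : ℂ) := by
    have e1 : (inner ℂ (toE (M *ᵥ (x : Fin n → ℂ))) (toE (M *ᵥ (x : Fin n → ℂ))) : ℂ)
        = inner ℂ x (toE ((Mᴴ * M) *ᵥ (x : Fin n → ℂ))) := by
      show inner ℂ (toE _) (toE _) = inner ℂ (toE (x : Fin n → ℂ)) (toE _)
      rw [inner_toE, inner_toE]
      show star (M *ᵥ (x : Fin n → ℂ)) ⬝ᵥ (M *ᵥ (x : Fin n → ℂ))
          = star (x : Fin n → ℂ) ⬝ᵥ ((Mᴴ * M) *ᵥ (x : Fin n → ℂ))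
      rw [star_mulVec, ← dotProduct_mulVec, mulVec_mulVec]
    rw [e1, ← (bas M).repr.inner_map_map x (toE ((Mᴴ * M) *ᵥ (x : Fin n → ℂ)))]
    rw [PiLp.inner_apply]
    simp only [RCLike.inner_apply', repr_mulVecH]
    rw [Complex.ofReal_sum]
    refine Finset.sum_congr rfl fun j _ => ?_
    rw [show (starRingEnd ℂ) ((bas M).repr x j) * ((mu M j : ℂ) * (bas M).repr x j)
        = (mu M j : ℂ) * ((starRingEnd ℂ) ((bas M).repr x j) * (bas M).repr x j) by ring,
      RCLike.conj_mul]
    apply Complex.ext <;> simp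
  have h2 := norm_sq_eq_re_inner (𝕜 := ℂ) (toE (M *ᵥ (x : Fin n → ℂ)))
  rw [h2, key]
  exact RCLike.ofReal_re _

lemma norm_sq_eq_sum_repr (x : E) : ‖x‖^2 = ∑ j, ‖(bas M).repr x j‖^2 := by
  have : ‖(bas M).repr x‖^2 = ∑ j, ‖(bas M).repr x j‖^2 := by
    rw [EuclideanSpace.norm_eq, Real.sq_sqrt (by positivity)]
  rw [← this, (bas M).repr.norm_map]

lemma sval_eq {k : ℕ} (hk1 : 1 ≤ k) (hkn : k ≤ n) :
    sval M k = Real.sqrt (mu M ⟨n - k, by omega⟩) := by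
  rw [sval, dif_pos ⟨hk1, hkn⟩]; rfl

lemma sval_nonneg (k : ℕ) : 0 ≤ sval M k := by
  rw [sval]; split
  · exact Real.sqrt_nonneg _
  · exact le_refl 0

lemma repr_eq_zero_of_mem_span {ι : Type} [Fintype ι] (g : ι → Fin n) (i : Fin n)
    (hi : ∀ t, g t ≠ i) (x : E)
    (hx : x ∈ Submodule.span ℂ (Set.range fun t => (bas M (g t) : E))) :
    (bas M).repr x i = 0 := by
  have hker : Submodule.span ℂ (Set.range fun t => (bas M (g t) : E)) ≤
      LinearMap.ker (innerSL ℂ (bas M i) : E →L[ℂ] ℂ).toLinearMap := by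
    rw [Submodule.span_le]
    rintro y ⟨t, rfl⟩
    simp only [SetLike.mem_coe, LinearMap.mem_ker, ContinuousLinearMap.coe_coe, innerSL_apply_apply]
    exact (bas M).orthonormal.2 (fun h => hi t h.symm)
  have := hker hx
  simp only [LinearMap.mem_ker, ContinuousLinearMap.coe_coe, innerSL_apply_apply] at this
  rw [OrthonormalBasis.repr_apply_apply]
  exact this

lemma exists_hi {k : ℕ} (hk1 : 1 ≤ k) (hkn : k ≤ n) :
    ∃ W : Submodule ℂ E, Module.finrank ℂ W = k ∧
      ∀ x ∈ W, sval M k * ‖x‖ ≤ ‖toE (M *ᵥ (x : Fin n → ℂ))‖ := by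
  have hg : ∀ t : Fin k, n - k + (t : ℕ) < n := fun t => by omega
  set g : Fin k → Fin n := fun t => ⟨n - k + t, hg t⟩ with hgdef
  refine ⟨Submodule.span ℂ (Set.range fun t => (bas M (g t) : E)), ?_, ?_⟩
  · rw [finrank_span_eq_card]
    · simp
    · exact ((bas M).orthonormal.linearIndependent).comp g
        (fun a b h => by simpa [hgdef, Fin.ext_iff] using h)
  · intro x hx
    have hzero : ∀ i : Fin n, (i : ℕ) < n - k → (bas M).repr x i = 0 := by
      intro i hi
      exact repr_eq_zero_of_mem_span M g i
        (fun t ht => by rw [Fin.ext_iff] at ht; simp [hgdef] at ht; omega) x hx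
    have h1 : (sval M k * ‖x‖)^2 ≤ ‖toE (M *ᵥ (x : Fin n → ℂ))‖^2 := by
      rw [mul_pow, quad, norm_sq_eq_sum_repr, Finset.mul_sum,
        sval_eq M hk1 hkn, Real.sq_sqrt (mu_nonneg M _)]
      refine Finset.sum_le_sum fun j _ => ?_
      by_cases hj : (j : ℕ) < n - k
      · rw [hzero j hj]; simp
      · exact mul_le_mul_of_nonneg_right
          (mu_monotone M (by rw [Fin.le_def]; simpa using Nat.le_of_not_lt hj))
          (by positivity)
    calc sval M k * ‖x‖ = Real.sqrt ((sval M k * ‖x‖)^2) :=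
          (Real.sqrt_sq (mul_nonneg (sval_nonneg M k) (norm_nonneg _))).symm
      _ ≤ Real.sqrt (‖toE (M *ᵥ (x : Fin n → ℂ))‖^2) := Real.sqrt_le_sqrt h1
      _ = _ := Real.sqrt_sq (norm_nonneg _)

lemma exists_lo {k : ℕ} (hk1 : 1 ≤ k) (hkn : k ≤ n) :
    ∃ V : Submodule ℂ E, Module.finrank ℂ V = n - k + 1 ∧
      ∀ x ∈ V, ‖toE (M *ᵥ (x : Fin n → ℂ))‖ ≤ sval M k * ‖x‖ := by
  have hg : ∀ t : Fin (n - k + 1), (t : ℕ) < n := fun t => by omega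
  set g : Fin (n - k + 1) → Fin n := fun t => ⟨t, hg t⟩ with hgdef
  refine ⟨Submodule.span ℂ (Set.range fun t => (bas M (g t) : E)), ?_, ?_⟩
  · rw [finrank_span_eq_card]
    · simp
    · exact ((bas M).orthonormal.linearIndependent).comp g
        (fun a b h => by simpa [hgdef, Fin.ext_iff] using h)
  · intro x hx
    have hzero : ∀ i : Fin n, n - k < (i : ℕ) → (bas M).repr x i = 0 := by
      intro i hi
      exact repr_eq_zero_of_mem_span M g i
        (fun t ht => by rw [Fin.ext_iff] at ht; simp [hgdef] at ht; omega) x hx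
    have h1 : ‖toE (M *ᵥ (x : Fin n → ℂ))‖^2 ≤ (sval M k * ‖x‖)^2 := by
      rw [mul_pow, quad, norm_sq_eq_sum_repr, Finset.mul_sum,
        sval_eq M hk1 hkn, Real.sq_sqrt (mu_nonneg M _)]
      refine Finset.sum_le_sum fun j _ => ?_
      by_cases hj : n - k < (j : ℕ)
      · rw [hzero j hj]; simp
      · exact mul_le_mul_of_nonneg_right
          (mu_monotone M (by rw [Fin.le_def]; simpa using Nat.le_of_not_lt hj))
          (by positivity)
    calc ‖toE (M *ᵥ (x : Fin n → ℂ))‖ = Real.sqrt (‖toE (M *ᵥ (x : Fin n → ℂ))‖^2) :=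
          (Real.sqrt_sq (norm_nonneg _)).symm
      _ ≤ Real.sqrt ((sval M k * ‖x‖)^2) := Real.sqrt_le_sqrt h1
      _ = _ := Real.sqrt_sq (mul_nonneg (sval_nonneg M k) (norm_nonneg _))

lemma sval_le_of_subspace {k : ℕ} (hk1 : 1 ≤ k) (hkn : k ≤ n) (V : Submodule ℂ E)
    (hV : n - k + 1 ≤ Module.finrank ℂ V) (c : ℝ)
    (hc : ∀ x ∈ V, ‖toE (M *ᵥ (x : Fin n → ℂ))‖ ≤ c * ‖x‖) : sval M k ≤ c := by
  obtain ⟨W, hW, hWle⟩ := exists_hi M hk1 hkn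
  have hne : V ⊓ W ≠ ⊥ := by
    intro h
    have h1 := Submodule.finrank_sup_add_finrank_inf_eq V W
    rw [h, finrank_bot] at h1
    have h2 : Module.finrank ℂ ↥(V ⊔ W) ≤ n :=
      le_trans (Submodule.finrank_le _) (by simp)
    omega
  obtain ⟨x, hxm, hx0⟩ := Submodule.exists_mem_ne_zero_of_ne_bot hne
  rw [Submodule.mem_inf] at hxm
  have := le_trans (hWle x hxm.2) (hc x hxm.1)
  exact le_of_mul_le_mul_right this (norm_pos_iff.mpr hx0)

lemma sval_eq_of_norm_eq {k : ℕ} (N : Matrix (Fin n) (Fin n) ℂ) (hk1 : 1 ≤ k) (hkn : k ≤ n)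
    (h : ∀ x : E, ‖toE (M *ᵥ (x : Fin n → ℂ))‖ = ‖toE (N *ᵥ (x : Fin n → ℂ))‖) :
    sval M k = sval N k := by
  have h1 : ∀ (P Q : Matrix (Fin n) (Fin n) ℂ),
      (∀ x : E, ‖toE (P *ᵥ (x : Fin n → ℂ))‖ = ‖toE (Q *ᵥ (x : Fin n → ℂ))‖) →
      sval P k ≤ sval Q k := by
    intro P Q hPQ
    obtain ⟨V, hV, hVle⟩ := exists_lo Q hk1 hkn
    exact sval_le_of_subspace P hk1 hkn V hV.ge (sval Q k)
      (fun x hx => (hPQ x) ▸ hVle x hx)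
  exact le_antisymm (h1 M N h) (h1 N M fun x => (h x).symm)

lemma sval_smul_one {k : ℕ} (hk1 : 1 ≤ k) (hkn : k ≤ n) (c : ℂ) :
    sval (c • (1 : Matrix (Fin n) (Fin n) ℂ)) k = ‖c‖ := by
  have hmv : ∀ x : E, toE ((c • (1 : Matrix (Fin n) (Fin n) ℂ)) *ᵥ (x : Fin n → ℂ)) = c • x := by
    intro x
    have h0 : (c • (1 : Matrix (Fin n) (Fin n) ℂ)) *ᵥ (x : Fin n → ℂ) = c • (x : Fin n → ℂ) := by
      rw [smul_mulVec, one_mulVec]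
    rw [h0]; rfl
  have hnorm : ∀ x : E, ‖toE ((c • (1 : Matrix (Fin n) (Fin n) ℂ)) *ᵥ (x : Fin n → ℂ))‖
      = ‖c‖ * ‖x‖ := by
    intro x; rw [hmv, norm_smul]
  refine le_antisymm ?_ ?_
  · refine sval_le_of_subspace _ hk1 hkn ⊤ (by simp; omega) _ (fun x _ => le_of_eq (hnorm x))
  · obtain ⟨V, hV, hVle⟩ := exists_lo (c • (1 : Matrix (Fin n) (Fin n) ℂ)) hk1 hkn
    have hne : V ≠ ⊥ := by
      intro h; rw [h, finrank_bot] at hV; omega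
    obtain ⟨x, hxm, hx0⟩ := Submodule.exists_mem_ne_zero_of_ne_bot hne
    have := (hnorm x) ▸ hVle x hxm
    exact le_of_mul_le_mul_right this (norm_pos_iff.mpr hx0)

lemma weyl2 {k : ℕ} (B C : Matrix (Fin n) (Fin n) ℂ) (hk1 : 1 ≤ k) (hk2 : 2 * k ≤ n + 1) :
    sval (B + C) (2 * k - 1) ≤ sval B k + sval C k := by
  have hkn : k ≤ n := by omega
  obtain ⟨V, hV, hVle⟩ := exists_lo B hk1 hkn
  obtain ⟨W, hW, hWle⟩ := exists_lo C hk1 hkn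
  refine sval_le_of_subspace _ (by omega) (by omega) (V ⊓ W) ?_ _ ?_
  · have h1 := Submodule.finrank_sup_add_finrank_inf_eq V W
    have h2 : Module.finrank ℂ ↥(V ⊔ W) ≤ n :=
      le_trans (Submodule.finrank_le _) (by simp)
    omega
  · intro x hx
    rw [Submodule.mem_inf] at hx
    have hadd : toE ((B + C) *ᵥ (x : Fin n → ℂ))
        = toE (B *ᵥ (x : Fin n → ℂ)) + toE (C *ᵥ (x : Fin n → ℂ)) := by
      show toE ((B + C) *ᵥ (x : Fin n → ℂ)) = toE (B *ᵥ (x : Fin n → ℂ) + C *ᵥ (x : Fin n → ℂ))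
      rw [add_mulVec]
    calc ‖toE ((B + C) *ᵥ (x : Fin n → ℂ))‖
        ≤ ‖toE (B *ᵥ (x : Fin n → ℂ))‖ + ‖toE (C *ᵥ (x : Fin n → ℂ))‖ := by
          rw [hadd]; exact norm_add_le _ _
      _ ≤ sval B k * ‖x‖ + sval C k * ‖x‖ := add_le_add (hVle x hx.1) (hWle x hx.2)
      _ = (sval B k + sval C k) * ‖x‖ := by ring

def frob (B : Matrix (Fin n) (Fin n) ℂ) : ℝ := Real.sqrt (∑ i, ∑ j, ‖B i j‖^2)

lemma frob_nonneg (B : Matrix (Fin n) (Fin n) ℂ) : 0 ≤ frob B := Real.sqrt_nonneg _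

lemma mulVec_norm_le (B : Matrix (Fin n) (Fin n) ℂ) (x : E) :
    ‖toE (B *ᵥ (x : Fin n → ℂ))‖ ≤ frob B * ‖x‖ := by
  have hsq : ‖toE (B *ᵥ (x : Fin n → ℂ))‖^2 ≤ (∑ i, ∑ j, ‖B i j‖^2) * ‖x‖^2 := by
    have hn : ‖toE (B *ᵥ (x : Fin n → ℂ))‖^2 = ∑ i, ‖(B *ᵥ (x : Fin n → ℂ)) i‖^2 := by
      rw [EuclideanSpace.norm_eq, Real.sq_sqrt (by positivity)]
      exact Finset.sum_congr rfl fun i _ => rfl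
    rw [hn, Finset.sum_mul]
    refine Finset.sum_le_sum fun i _ => ?_
    set u : E := toE (fun j => (starRingEnd ℂ) (B i j)) with hu
    have hyi : (B *ᵥ (x : Fin n → ℂ)) i = inner ℂ u x := by
      rw [PiLp.inner_apply]
      simp [hu, RCLike.inner_apply', Matrix.mulVec, dotProduct, toE]
      exact Finset.sum_congr rfl fun _ _ => mul_comm _ _
    have hub : ‖u‖^2 = ∑ j, ‖B i j‖^2 := by
      rw [EuclideanSpace.norm_eq, Real.sq_sqrt (by positivity)]
      simp [hu, toE]
    calc ‖(B *ᵥ (x : Fin n → ℂ)) i‖^2 = ‖(inner ℂ u x : ℂ)‖^2 := by rw [hyi]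
      _ ≤ (‖u‖ * ‖x‖)^2 := by
          have h := norm_inner_le_norm (𝕜 := ℂ) u x
          have h0 := norm_nonneg (inner ℂ u x : ℂ)
          nlinarith
      _ = (∑ j, ‖B i j‖^2) * ‖x‖^2 := by rw [mul_pow, hub]
  calc ‖toE (B *ᵥ (x : Fin n → ℂ))‖ = Real.sqrt (‖toE (B *ᵥ (x : Fin n → ℂ))‖^2) :=
        (Real.sqrt_sq (norm_nonneg _)).symm
    _ ≤ Real.sqrt ((∑ i, ∑ j, ‖B i j‖^2) * ‖x‖^2) := Real.sqrt_le_sqrt hsq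
    _ = frob B * ‖x‖ := by
        rw [Real.sqrt_mul (by positivity), Real.sqrt_sq (norm_nonneg _)]; rfl

lemma sval_le_add {k : ℕ} (hk1 : 1 ≤ k) (hkn : k ≤ n) (N : Matrix (Fin n) (Fin n) ℂ) :
    sval M k ≤ sval N k + frob (M - N) := by
  obtain ⟨V, hV, hVle⟩ := exists_lo N hk1 hkn
  refine sval_le_of_subspace _ hk1 hkn V hV.ge _ (fun x hx => ?_)
  have hdec : M *ᵥ (x : Fin n → ℂ) = N *ᵥ (x : Fin n → ℂ) + (M - N) *ᵥ (x : Fin n → ℂ) := by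
    have hmat : N + (M - N) = M := by abel
    rw [← add_mulVec, hmat]
  have : toE (M *ᵥ (x : Fin n → ℂ))
      = toE (N *ᵥ (x : Fin n → ℂ)) + toE ((M - N) *ᵥ (x : Fin n → ℂ)) := by
    rw [hdec]; rfl
  calc ‖toE (M *ᵥ (x : Fin n → ℂ))‖
      ≤ ‖toE (N *ᵥ (x : Fin n → ℂ))‖ + ‖toE ((M - N) *ᵥ (x : Fin n → ℂ))‖ := by
        rw [this]; exact norm_add_le _ _
    _ ≤ sval N k * ‖x‖ + frob (M - N) * ‖x‖ := add_le_add (hVle x hx) (mulVec_norm_le _ x)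
    _ = (sval N k + frob (M - N)) * ‖x‖ := by ring

lemma frob_smul_one (c : ℂ) : frob (c • (1 : Matrix (Fin n) (Fin n) ℂ)) ≤ ‖c‖ * n := by
  have h : ∀ i j : Fin n, ‖(c • (1 : Matrix (Fin n) (Fin n) ℂ)) i j‖^2
      = if j = i then ‖c‖ ^ 2 else 0 := by
    intro i j
    by_cases hij : j = i
    · simp [hij, Matrix.smul_apply, Matrix.one_apply]
    · simp [Matrix.smul_apply, Matrix.one_apply, Ne.symm hij, hij]
  rw [frob]
  simp only [h, Finset.sum_ite_eq', Finset.mem_univ, if_true]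
  rw [Finset.sum_const, Finset.card_univ, Fintype.card_fin, nsmul_eq_mul]
  calc Real.sqrt (n * ‖c‖ ^ 2) = Real.sqrt n * ‖c‖ := by
        rw [Real.sqrt_mul (by positivity), Real.sqrt_sq (by positivity)]
    _ ≤ n * ‖c‖ := by
        have hsn : Real.sqrt n ≤ n := by
          rcases Nat.eq_zero_or_pos n with h0 | h0
          · simp [h0]
          · have h1 : (1:ℝ) ≤ n := by exact_mod_cast h0
            calc Real.sqrt n ≤ Real.sqrt ((n:ℝ)^2) := Real.sqrt_le_sqrt (by nlinarith)
              _ = n := Real.sqrt_sq (by positivity)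
        exact mul_le_mul_of_nonneg_right hsn (by positivity)
    _ = ‖c‖ * n := by ring

variable {k : ℕ} (A : Matrix (Fin n) (Fin n) ℂ)

lemma sval_shift_le (hk1 : 1 ≤ k) (hkn : k ≤ n) (z w : ℂ) :
    sval (z • (1 : Matrix (Fin n) (Fin n) ℂ) - A) k
      ≤ sval (w • (1 : Matrix (Fin n) (Fin n) ℂ) - A) k + ‖z - w‖ * n := by
  have hmat : (z • (1 : Matrix (Fin n) (Fin n) ℂ) - A) - (w • (1 : Matrix (Fin n) (Fin n) ℂ) - A)
      = (z - w) • (1 : Matrix (Fin n) (Fin n) ℂ) := by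
    rw [sub_smul]; abel
  calc sval (z • (1 : Matrix (Fin n) (Fin n) ℂ) - A) k
      ≤ sval (w • (1 : Matrix (Fin n) (Fin n) ℂ) - A) k
        + frob ((z • (1 : Matrix (Fin n) (Fin n) ℂ) - A)
            - (w • (1 : Matrix (Fin n) (Fin n) ℂ) - A)) := sval_le_add _ hk1 hkn _
    _ ≤ _ := by rw [hmat]; exact add_le_add le_rfl (frob_smul_one _)

lemma f_continuous (hk1 : 1 ≤ k) (hkn : k ≤ n) :
    Continuous (fun z : ℂ => sval (z • (1 : Matrix (Fin n) (Fin n) ℂ) - A) k) := by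
  have hlip : LipschitzWith (n : NNReal)
      (fun z : ℂ => sval (z • (1 : Matrix (Fin n) (Fin n) ℂ) - A) k) := by
    refine LipschitzWith.of_dist_le_mul fun z w => ?_
    rw [Real.dist_eq, Complex.dist_eq, abs_sub_le_iff]
    have h1 := sval_shift_le A hk1 hkn z w
    have h2 := sval_shift_le A hk1 hkn w z
    have h3 : ‖w - z‖ = ‖z - w‖ := by
      rw [show w - z = -(z - w) by ring, norm_neg]
    rw [h3] at h2
    constructor
    · push_cast; linarith
    · push_cast; linarith
  exact hlip.continuous

lemma exists_min (hk1 : 1 ≤ k) (hkn : k ≤ n) :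
    ∃ zk : ℂ, ∀ z : ℂ,
      sval (zk • (1 : Matrix (Fin n) (Fin n) ℂ) - A) k ≤
        sval (z • (1 : Matrix (Fin n) (Fin n) ℂ) - A) k := by
  set f : ℂ → ℝ := fun z => sval (z • (1 : Matrix (Fin n) (Fin n) ℂ) - A) k with hf
  have hcoer : ∀ z : ℂ, ‖z‖ - frob A ≤ f z := by
    intro z
    have h1 : sval (z • (1 : Matrix (Fin n) (Fin n) ℂ)) k
        ≤ sval (z • (1 : Matrix (Fin n) (Fin n) ℂ) - A) k
          + frob ((z • (1 : Matrix (Fin n) (Fin n) ℂ))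
              - (z • (1 : Matrix (Fin n) (Fin n) ℂ) - A)) := sval_le_add _ hk1 hkn _
    have h2 : (z • (1 : Matrix (Fin n) (Fin n) ℂ))
        - (z • (1 : Matrix (Fin n) (Fin n) ℂ) - A) = A := by abel
    rw [h2, sval_smul_one hk1 hkn] at h1
    simp only [hf]
    linarith
  set R := frob A + f 0 with hR
  have hR0 : 0 ≤ R := add_nonneg (frob_nonneg A) (sval_nonneg _ _)
  obtain ⟨zk, hzkmem, hzkmin⟩ := (isCompact_closedBall (0:ℂ) R).exists_isMinOn
    ⟨0, by simp [hR0]⟩ (f_continuous A hk1 hkn).continuousOn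
  rw [isMinOn_iff] at hzkmin
  refine ⟨zk, fun z => ?_⟩
  by_cases hz : z ∈ Metric.closedBall (0:ℂ) R
  · exact hzkmin z hz
  · have h3 : R < ‖z‖ := by
      rw [Metric.mem_closedBall, not_le, Complex.dist_eq, sub_zero] at hz
      exact hz
    have h4 := hcoer z
    have h5 : f zk ≤ f 0 := hzkmin 0 (by simp [hR0])
    show f zk ≤ f z
    linarith

end Aux15b


/-- lower bound on shifted singular values: a minimizer `z_k` of
`z ↦ σ_k(zI−A)` exists, and for any such minimizer and every `z`,
`σ_k(zI−A) ≥ max(s_k, |z−z_k|/2)`. -/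
theorem stmt15 (n k : ℕ) (hk : 1 ≤ k) (hk2 : 2 * k ≤ n + 1)
    (A : Matrix (Fin n) (Fin n) ℂ) :
    (∃ zk : ℂ, ∀ z : ℂ,
        sval (zk • (1 : Matrix (Fin n) (Fin n) ℂ) - A) k ≤
          sval (z • (1 : Matrix (Fin n) (Fin n) ℂ) - A) k) ∧
    (∀ zk : ℂ,
      (∀ z : ℂ, sval (zk • (1 : Matrix (Fin n) (Fin n) ℂ) - A) k ≤
          sval (z • (1 : Matrix (Fin n) (Fin n) ℂ) - A) k) →
      ∀ z : ℂ, sval (z • (1 : Matrix (Fin n) (Fin n) ℂ) - A) k ≥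
        max (sval (zk • (1 : Matrix (Fin n) (Fin n) ℂ) - A) k)
          (‖z - zk‖ / 2)) := by
  have hkn : k ≤ n := by omega
  constructor
  · exact exists_min A hk hkn
  · intro zk hmin z
    rw [ge_iff_le, max_le_iff]
    refine ⟨hmin z, ?_⟩
    have hk21 : 1 ≤ 2 * k - 1 := by omega
    have hk2n : 2 * k - 1 ≤ n := by omega
    have hB : (z • (1 : Matrix (Fin n) (Fin n) ℂ) - A)
        + (-(zk • (1 : Matrix (Fin n) (Fin n) ℂ) - A))
        = (z - zk) • (1 : Matrix (Fin n) (Fin n) ℂ) := by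
      rw [sub_smul]; abel
    have hneg : sval (-(zk • (1 : Matrix (Fin n) (Fin n) ℂ) - A)) k
        = sval (zk • (1 : Matrix (Fin n) (Fin n) ℂ) - A) k := by
      refine sval_eq_of_norm_eq _ _ hk hkn fun x => ?_
      rw [neg_mulVec]
      exact norm_neg (toE ((zk • (1 : Matrix (Fin n) (Fin n) ℂ) - A) *ᵥ (x : Fin n → ℂ)))
    have h2 := weyl2 (z • (1 : Matrix (Fin n) (Fin n) ℂ) - A)
      (-(zk • (1 : Matrix (Fin n) (Fin n) ℂ) - A)) hk hk2
    rw [hB, hneg, sval_smul_one hk21 hk2n] at h2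
    have h3 := hmin z
    linarith
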